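/- Let g have matrix ![![A,B,B],![B,A,B],![B,B,A]] with A > B > 0, Q the circulant permutation matrix, and g̃(u,v) = g(u,Qv)+g(Qu,v). If x induces a Q-basis and φ is the g-angle between x and Qx, then g̃(x,Qx) = g̃(x,Q²x) = g̃(Qx,Q²x) = g(x,x)(cos φ + 1) and g̃(x,x) = g̃(Qx,Qx) = g̃(Q²x,Q²x) = 2 g(x,x) cos φ. -/

import Mathlib

open Matrix

theorem stmt_7 (A B : ℝ) (hAB : A > B) (hB : B > 0) (x : Fin 3 → ℝ)
    (G : Matrix (Fin 3) (Fin 3) ℝ) (hGdef : G = !![A,B,B; B,A,B; B,B,A])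
    (Q : Matrix (Fin 3) (Fin 3) ℝ) (hQdef : Q = !![(0:ℝ),1,0; 0,0,1; 1,0,0])
    (Gt : Matrix (Fin 3) (Fin 3) ℝ)
    (hGt : Gt = !![2*B, A+B, A+B; A+B, 2*B, A+B; A+B, A+B, 2*B])
    (hli : LinearIndependent ℝ ![x, Q.mulVec x, Q.mulVec (Q.mulVec x)])
    (φ : ℝ) (hφ : φ = Real.arccos ((x ⬝ᵥ G.mulVec (Q.mulVec x)) / (x ⬝ᵥ G.mulVec x))) :
    x ⬝ᵥ Gt.mulVec (Q.mulVec x) = (x ⬝ᵥ G.mulVec x) * (Real.cos φ + 1) ∧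
    x ⬝ᵥ Gt.mulVec (Q.mulVec (Q.mulVec x)) = (x ⬝ᵥ G.mulVec x) * (Real.cos φ + 1) ∧
    (Q.mulVec x) ⬝ᵥ Gt.mulVec (Q.mulVec (Q.mulVec x)) = (x ⬝ᵥ G.mulVec x) * (Real.cos φ + 1) ∧
    x ⬝ᵥ Gt.mulVec x = 2 * (x ⬝ᵥ G.mulVec x) * Real.cos φ ∧
    (Q.mulVec x) ⬝ᵥ Gt.mulVec (Q.mulVec x) = 2 * (x ⬝ᵥ G.mulVec x) * Real.cos φ ∧
    (Q.mulVec (Q.mulVec x)) ⬝ᵥ Gt.mulVec (Q.mulVec (Q.mulVec x)) =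
      2 * (x ⬝ᵥ G.mulVec x) * Real.cos φ := by
  have hx0 : x ≠ 0 := by
    have := hli.ne_zero 0
    simpa using this
  set a := x 0 with ha
  set b := x 1 with hb
  set c := x 2 with hc
  have hp : a^2 + b^2 + c^2 > 0 := by
    rcases Function.ne_iff.mp hx0 with ⟨i, hi⟩
    simp only [Pi.zero_apply] at hi
    rw [ha, hb, hc]
    fin_cases i <;> simp at hi <;> positivity
  have hgxx : x ⬝ᵥ G.mulVec x = A*(a^2+b^2+c^2) + 2*B*(a*b+b*c+c*a) := by
    simp [hGdef, mulVec, dotProduct, Fin.sum_univ_three, Matrix.vecHead, Matrix.vecTail,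
      ← ha, ← hb, ← hc]
    ring
  have hgxQx : x ⬝ᵥ G.mulVec (Q.mulVec x)
      = B*(a^2+b^2+c^2) + (A+B)*(a*b+b*c+c*a) := by
    simp [hGdef, hQdef, mulVec, dotProduct, Fin.sum_univ_three, Matrix.vecHead, Matrix.vecTail,
      ← ha, ← hb, ← hc]
    ring
  have hs : a*b+b*c+c*a ≥ -(a^2+b^2+c^2)/2 := by nlinarith [sq_nonneg (a+b+c)]
  have hps : a^2+b^2+c^2 ≥ a*b+b*c+c*a := by
    nlinarith [sq_nonneg (a-b), sq_nonneg (b-c), sq_nonneg (c-a)]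
  have hgpos : x ⬝ᵥ G.mulVec x > 0 := by rw [hgxx]; nlinarith
  have h1 : -1 ≤ (x ⬝ᵥ G.mulVec (Q.mulVec x)) / (x ⬝ᵥ G.mulVec x) := by
    rw [le_div_iff₀ hgpos, hgxx, hgxQx]
    nlinarith
  have h2 : (x ⬝ᵥ G.mulVec (Q.mulVec x)) / (x ⬝ᵥ G.mulVec x) ≤ 1 := by
    rw [div_le_one hgpos, hgxx, hgxQx]
    nlinarith
  have hcos : Real.cos φ = (x ⬝ᵥ G.mulVec (Q.mulVec x)) / (x ⬝ᵥ G.mulVec x) := by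
    rw [hφ, Real.cos_arccos h1 h2]
  have hne : A*(a^2+b^2+c^2) + 2*B*(a*b+b*c+c*a) ≠ 0 := by
    rw [← hgxx]; exact ne_of_gt hgpos
  have e1 : x ⬝ᵥ Gt.mulVec (Q.mulVec x)
      = (A+B)*(a^2+b^2+c^2) + (A+3*B)*(a*b+b*c+c*a) := by
    simp [hGt, hQdef, mulVec, dotProduct, Fin.sum_univ_three, Matrix.vecHead, Matrix.vecTail,
      ← ha, ← hb, ← hc]
    ring
  have e2 : x ⬝ᵥ Gt.mulVec (Q.mulVec (Q.mulVec x))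
      = (A+B)*(a^2+b^2+c^2) + (A+3*B)*(a*b+b*c+c*a) := by
    simp [hGt, hQdef, mulVec, dotProduct, Fin.sum_univ_three, Matrix.vecHead, Matrix.vecTail,
      ← ha, ← hb, ← hc]
    ring
  have e3 : (Q.mulVec x) ⬝ᵥ Gt.mulVec (Q.mulVec (Q.mulVec x))
      = (A+B)*(a^2+b^2+c^2) + (A+3*B)*(a*b+b*c+c*a) := by
    simp [hGt, hQdef, mulVec, dotProduct, Fin.sum_univ_three, Matrix.vecHead, Matrix.vecTail,
      ← ha, ← hb, ← hc]
    ring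
  have e4 : x ⬝ᵥ Gt.mulVec x
      = 2*B*(a^2+b^2+c^2) + 2*(A+B)*(a*b+b*c+c*a) := by
    simp [hGt, mulVec, dotProduct, Fin.sum_univ_three, Matrix.vecHead, Matrix.vecTail,
      ← ha, ← hb, ← hc]
    ring
  have e5 : (Q.mulVec x) ⬝ᵥ Gt.mulVec (Q.mulVec x)
      = 2*B*(a^2+b^2+c^2) + 2*(A+B)*(a*b+b*c+c*a) := by
    simp [hGt, hQdef, mulVec, dotProduct, Fin.sum_univ_three, Matrix.vecHead, Matrix.vecTail,
      ← ha, ← hb, ← hc]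
    ring
  have e6 : (Q.mulVec (Q.mulVec x)) ⬝ᵥ Gt.mulVec (Q.mulVec (Q.mulVec x))
      = 2*B*(a^2+b^2+c^2) + 2*(A+B)*(a*b+b*c+c*a) := by
    simp [hGt, hQdef, mulVec, dotProduct, Fin.sum_univ_three, Matrix.vecHead, Matrix.vecTail,
      ← ha, ← hb, ← hc]
    ring
  refine ⟨?_, ?_, ?_, ?_, ?_, ?_⟩ <;>
    rw [hcos, hgxx, hgxQx] <;>
    [rw [e1]; rw [e2]; rw [e3]; rw [e4]; rw [e5]; rw [e6]] <;>
    field_simp [hne] <;> grind
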